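/- Let Ω ⊂ ℝ³ be a nonempty open bounded set. Then there exist x ∈ ℝ³, r > 0, and points y, z ∈ ∂Ω with |y − x| = |z − x| = r such that B(x,r) ⊆ Ω and ⟨y − x, z − x⟩ ≤ 0 (so the angle between y − x and z − x is at least π/2). In particular, the family 𝒜(Ω) of balls contained in Ω touching the boundary in two directions making an angle of at least π/4 is nonempty. -/

import Mathlib

open Metric Set

noncomputable abbrev E3 := EuclideanSpace ℝ (Fin 3)

private lemma le_infDist_aux {s : Set E3} (hs : s.Nonempty) {x : E3} {b : ℝ}
    (h : ∀ y ∈ s, b ≤ dist x y) : b ≤ Metric.infDist x s :=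
  not_lt.1 fun hlt => by
    obtain ⟨y, hy, hd⟩ := (Metric.infDist_lt_iff hs).1 hlt
    exact absurd hd (not_lt.2 (h y hy))

set_option maxHeartbeats 1000000 in
theorem exists_ball_touching_in_two_directions
    (Ω : Set E3) (hΩo : IsOpen Ω) (hΩb : Bornology.IsBounded Ω) (hΩne : Ω.Nonempty) :
    ∃ (x : E3) (r : ℝ) (y z : E3), 0 < r ∧ ball x r ⊆ Ω ∧
      y ∈ frontier Ω ∧ z ∈ frontier Ω ∧
      dist y x = r ∧ dist z x = r ∧
      (inner ℝ (y - x) (z - x) : ℝ) ≤ 0 := by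
  -- the complement is nonempty and closed
  have hcne : Ωᶜ.Nonempty := by
    rw [Set.nonempty_compl]
    intro h
    obtain ⟨R, hR⟩ := hΩb.subset_closedBall (0 : E3)
    rw [h] at hR
    have h1 : (EuclideanSpace.single (0 : Fin 3) (|R| + 1) : E3) ∈ closedBall (0 : E3) R :=
      hR (mem_univ _)
    rw [mem_closedBall, dist_zero_right, EuclideanSpace.norm_single, Real.norm_eq_abs,
      abs_of_nonneg (show (0:ℝ) ≤ |R| + 1 by positivity)] at h1
    have := abs_nonneg R
    have := le_abs_self R
    linarith
  have hccl : IsClosed Ωᶜ := hΩo.isClosed_compl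
  -- choose a point of `closure Ω` maximizing the distance to the complement
  have hKc : IsCompact (closure Ω) := hΩb.isCompact_closure
  obtain ⟨x, hxcl, hmax⟩ :=
    hKc.exists_isMaxOn hΩne.closure (Metric.continuous_infDist_pt Ωᶜ).continuousOn
  set r : ℝ := Metric.infDist x Ωᶜ with hrdef
  have hmax' : ∀ p ∈ closure Ω, Metric.infDist p Ωᶜ ≤ r := fun p hp => hmax hp
  -- r > 0
  obtain ⟨p, hp⟩ := hΩne
  obtain ⟨ε, hε, hball⟩ := Metric.isOpen_iff.1 hΩo p hp
  have hgp : ε ≤ Metric.infDist p Ωᶜ := by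
    refine le_infDist_aux hcne fun w hw => ?_
    by_contra hcon
    push_neg at hcon
    exact hw (hball (by rwa [mem_ball, dist_comm]))
  have hrpos : 0 < r := lt_of_lt_of_le hε (le_trans hgp (hmax' p (subset_closure hp)))
  -- the open ball of radius r is inside Ω
  have hballΩ : ball x r ⊆ Ω := by
    intro q hq
    by_contra hqc
    have h1 := Metric.infDist_le_dist_of_mem (x := x) (show q ∈ Ωᶜ from hqc)
    rw [mem_ball] at hq
    rw [dist_comm] at hq
    linarith
  -- every point of Ωᶜ is at distance ≥ r
  have hfar : ∀ w ∈ Ωᶜ, r ≤ dist w x := fun w hw => by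
    rw [dist_comm]; exact Metric.infDist_le_dist_of_mem hw
  -- points on the sphere lying in Ωᶜ are in the frontier
  have hfr : ∀ w, dist w x = r → w ∈ Ωᶜ → w ∈ frontier Ω := by
    intro w hwd hwc
    rw [hΩo.frontier_eq]
    refine ⟨?_, hwc⟩
    have h1 : w ∈ closedBall x r := by rw [mem_closedBall]; exact le_of_eq hwd
    rw [← closure_ball x hrpos.ne'] at h1
    exact closure_mono hballΩ h1
  -- a contact point exists
  obtain ⟨y₀, hy₀c, hy₀d⟩ := hccl.exists_infDist_eq_dist hcne x
  have hy₀d' : dist y₀ x = r := by rw [dist_comm]; exact hy₀d.symm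
  by_contra hcon
  -- key: any two contact points make a positive inner product
  have key : ∀ y z : E3, dist y x = r → dist z x = r → y ∈ Ωᶜ → z ∈ Ωᶜ →
      (0 : ℝ) < inner ℝ (y - x) (z - x) := by
    intro y z hy hz hyc hzc
    by_contra h
    push_neg at h
    exact hcon ⟨x, r, y, z, hrpos, hballΩ, hfr y hy hyc, hfr z hz hzc, hy, hz, h⟩
  set v : E3 := y₀ - x with hvdef
  have hvnorm : ‖v‖ = r := by rw [hvdef, ← dist_eq_norm]; exact hy₀d'
  -- points of Ωᶜ on the "wrong side" are uniformly far
  have hη : ∃ η : ℝ, 0 < η ∧ η ≤ 1 ∧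
      ∀ w ∈ Ωᶜ, (inner ℝ (w - x) v : ℝ) ≤ 0 → r + η ≤ dist w x := by
    set S : Set E3 := {w | w ∈ Ωᶜ ∧ dist w x ≤ r + 1 ∧ (inner ℝ (w - x) v : ℝ) ≤ 0} with hSdef
    have hScl : IsClosed S := by
      have hSeq : S = Ωᶜ ∩ (closedBall x (r + 1) ∩ {w | (inner ℝ (w - x) v : ℝ) ≤ 0}) := by
        ext w; simp [hSdef, mem_closedBall, and_assoc]
      rw [hSeq]
      exact hccl.inter (Metric.isClosed_closedBall.inter
        (isClosed_le ((continuous_id.sub continuous_const).inner continuous_const)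
          continuous_const))
    have hSc : IsCompact S := Metric.isCompact_of_isClosed_isBounded hScl
      (Metric.isBounded_closedBall.subset fun w hw => hw.2.1)
    rcases S.eq_empty_or_nonempty with hS | hS
    · refine ⟨1, one_pos, le_refl _, fun w hw hwi => ?_⟩
      by_contra hlt
      push_neg at hlt
      exact absurd (show w ∈ S from ⟨hw, le_of_lt hlt, hwi⟩) (by rw [hS]; exact notMem_empty w)
    · obtain ⟨w₀, hw₀S, hw₀min⟩ := hSc.exists_isMinOn hS (by fun_prop : Continuous fun w => dist w x).continuousOn
      have hw₀min' : ∀ w ∈ S, dist w₀ x ≤ dist w x := fun w hw => hw₀min hw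
      have hgt : r < dist w₀ x := by
        rcases lt_or_eq_of_le (hfar w₀ hw₀S.1) with h | h
        · exact h
        · exact absurd (key w₀ y₀ h.symm hy₀d' hw₀S.1 hy₀c) (not_lt.2 hw₀S.2.2)
      refine ⟨min (dist w₀ x - r) 1, lt_min (by linarith) one_pos, min_le_right _ _,
        fun w hw hwi => ?_⟩
      rcases le_or_gt (dist w x) (r + 1) with h | h
      · have := hw₀min' w ⟨hw, h, hwi⟩
        have := min_le_left (dist w₀ x - r) 1
        linarith
      · have := min_le_right (dist w₀ x - r) 1
        linarith
  obtain ⟨η, hηpos, hη1, hηfar⟩ := hη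
  -- move the center away from the contact direction
  set t : ℝ := min 1 (η / (2 * r)) with htdef
  have htpos : 0 < t := lt_min one_pos (div_pos hηpos (by linarith))
  have ht1 : t ≤ 1 := min_le_left _ _
  have htr : t * r ≤ η / 2 := by
    have h1 : t ≤ η / (2 * r) := min_le_right _ _
    calc t * r ≤ (η / (2 * r)) * r := by nlinarith
    _ = η / 2 := by field_simp
  set x' : E3 := x - t • v with hx'def
  set ε : ℝ := min (t ^ 2 * r / 4) (η / 2) with hεdef
  have hεpos : 0 < ε := lt_min (by positivity) (by linarith)
  have hε1 : ε ≤ t ^ 2 * r / 4 := min_le_left _ _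
  have hε2 : ε ≤ η / 2 := min_le_right _ _
  have hdxx' : dist x x' = t * r := by
    rw [hx'def, dist_eq_norm, sub_sub_cancel, norm_smul, Real.norm_eq_abs,
      abs_of_pos htpos, hvnorm]
  -- every point of Ωᶜ is at distance ≥ r + ε from x'
  have hkey2 : ∀ w ∈ Ωᶜ, r + ε ≤ dist x' w := by
    intro w hw
    rcases le_or_gt 0 (inner ℝ (w - x) v : ℝ) with hip | hip
    · -- expand the square
      have hsub : w - x' = (w - x) + t • v := by rw [hx'def]; abel
      have hexp : ‖w - x'‖ ^ 2 = ‖w - x‖ ^ 2 + 2 * (t * (inner ℝ (w - x) v : ℝ)) + (t * r) ^ 2 := by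
        rw [hsub, norm_add_sq_real, real_inner_smul_right, norm_smul, Real.norm_eq_abs,
          abs_of_pos htpos, hvnorm]
      have h1 : r ≤ ‖w - x‖ := by rw [← dist_eq_norm]; exact hfar w hw
      have h1sq : r ^ 2 ≤ ‖w - x‖ ^ 2 := pow_le_pow_left₀ hrpos.le h1 2
      have h4 : 4 * ε * r ≤ t ^ 2 * r ^ 2 := by nlinarith [mul_le_mul_of_nonneg_right hε1 hrpos.le]
      have h2 : (r + ε) ^ 2 ≤ ‖w - x'‖ ^ 2 := by
        nlinarith [mul_nonneg htpos.le hip, sq_nonneg t, mul_pos htpos hrpos,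
          mul_le_mul_of_nonneg_right ht1 (mul_pos htpos hrpos).le]
      have h3 : r + ε ≤ ‖w - x'‖ :=
        le_of_pow_le_pow_left₀ two_ne_zero (norm_nonneg _) h2
      rwa [dist_eq_norm, norm_sub_rev]
    · have h1 : r + η ≤ dist w x := hηfar w hw (le_of_lt hip)
      have h2 : dist x w ≤ dist x x' + dist x' w := dist_triangle x x' w
      rw [dist_comm x w] at h2
      rw [hdxx'] at h2
      linarith
  have hinf : r + ε ≤ Metric.infDist x' Ωᶜ := le_infDist_aux hcne hkey2
  have hx'Ω : x' ∈ Ω := by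
    by_contra h
    have := Metric.infDist_zero_of_mem (show x' ∈ Ωᶜ from h)
    rw [this] at hinf
    linarith
  have := hmax' x' (subset_closure hx'Ω)
  linarith
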